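/- If non-negative random variables $X_n$ converge weakly (in distribution) to $X$, then $\kappa(X) \leq \liminf_n \kappa(X_n)$, where $\kappa(Z) = \mathbb{E}|\tfrac{Z-Z'}{Z+Z'}|$ with $Z'$ an independent copy of $Z$ and the convention $0/0 = 0$. -/

import Mathlib

open MeasureTheory Filter Topology

open Set ENNReal


lemma f_lsc : LowerSemicontinuous (fun p : ℝ × ℝ => |(p.1 - p.2) / (p.1 + p.2)|) := by
  intro p
  rcases eq_or_ne (p.1 + p.2) 0 with h | h
  · intro y hy
    have hy0 : y < 0 := by simpa [h] using hy
    exact Eventually.of_forall fun q => lt_of_lt_of_le hy0 (abs_nonneg _)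
  · have hc : ContinuousAt (fun p : ℝ × ℝ => |(p.1 - p.2) / (p.1 + p.2)|) p :=
      (((continuousAt_fst.sub continuousAt_snd).div
        (continuousAt_fst.add continuousAt_snd) h)).abs
    exact hc.lowerSemicontinuousAt

def NF (ν : ProbabilityMeasure ℝ) (U : Set ℝ) : Prop :=
  IsOpen U ∧ (ν : Measure ℝ) (frontier U) = 0

lemma NF.inter {ν : ProbabilityMeasure ℝ} {U V : Set ℝ} (hU : NF ν U) (hV : NF ν V) :
    NF ν (U ∩ V) := by
  refine ⟨hU.1.inter hV.1, ?_⟩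
  have h := measure_mono (μ := (ν : Measure ℝ)) (frontier_inter_subset U V)
  have h2 : (ν : Measure ℝ) (frontier U ∩ closure V ∪ closure U ∩ frontier V) ≤ 0 := by
    refine le_trans (measure_union_le _ _) ?_
    have := measure_mono (μ := (ν : Measure ℝ)) (inter_subset_left (s := frontier U) (t := closure V))
    have := measure_mono (μ := (ν : Measure ℝ)) (inter_subset_right (s := closure U) (t := frontier V))
    simp_all [hU.2, hV.2, nonpos_iff_eq_zero]
  exact le_antisymm (h.trans h2) zero_le

lemma rect_tendsto {μ : ℕ → ProbabilityMeasure ℝ} {ν : ProbabilityMeasure ℝ}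
    (hconv : Tendsto μ atTop (𝓝 ν)) {U V : Set ℝ} (hU : NF ν U) (hV : NF ν V) :
    Tendsto (fun n => ((μ n : Measure ℝ).prod (μ n : Measure ℝ)) (U ×ˢ V)) atTop
      (𝓝 (((ν : Measure ℝ).prod (ν : Measure ℝ)) (U ×ˢ V))) := by
  simp only [Measure.prod_prod]
  have hUt := ProbabilityMeasure.tendsto_measure_of_null_frontier_of_tendsto' hconv hU.2
  have hVt := ProbabilityMeasure.tendsto_measure_of_null_frontier_of_tendsto' hconv hV.2
  exact ENNReal.Tendsto.mul hUt (Or.inr (measure_ne_top _ _)) hVt (Or.inr (measure_ne_top _ _))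

lemma union_tendsto {μ : ℕ → ProbabilityMeasure ℝ} {ν : ProbabilityMeasure ℝ}
    (hconv : Tendsto μ atTop (𝓝 ν)) (s : Finset ℕ) :
    ∀ (F G : ℕ → Set ℝ), (∀ i ∈ s, NF ν (F i) ∧ NF ν (G i)) →
    Tendsto (fun n => ((μ n : Measure ℝ).prod (μ n : Measure ℝ)) (⋃ i ∈ s, F i ×ˢ G i)) atTop
      (𝓝 (((ν : Measure ℝ).prod (ν : Measure ℝ)) (⋃ i ∈ s, F i ×ˢ G i))) := by
  induction s using Finset.induction_on with
  | empty => simp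
  | @insert a s ha IH =>
    intro F G hFG
    have hmem : ∀ i ∈ s, NF ν (F i) ∧ NF ν (G i) := fun i hi => hFG i (Finset.mem_insert_of_mem hi)
    have haa : NF ν (F a) ∧ NF ν (G a) := hFG a (Finset.mem_insert_self a s)
    have hBmble : ∀ (κ : Measure (ℝ × ℝ)), True := fun _ => trivial
    have Bmble : MeasurableSet (⋃ i ∈ s, F i ×ˢ G i) :=
      s.measurableSet_biUnion fun i hi =>
        ((hmem i hi).1.1.measurableSet.prod (hmem i hi).2.1.measurableSet)
    have inter_eq : (F a ×ˢ G a) ∩ (⋃ i ∈ s, F i ×ˢ G i)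
        = ⋃ i ∈ s, (F a ∩ F i) ×ˢ (G a ∩ G i) := by
      rw [Set.inter_iUnion₂]
      exact Set.iUnion₂_congr fun i hi => Set.prod_inter_prod
    have key : ∀ (κ : Measure (ℝ × ℝ)) [IsFiniteMeasure κ],
        κ (⋃ i ∈ insert a s, F i ×ˢ G i)
          = (κ (F a ×ˢ G a) + κ (⋃ i ∈ s, F i ×ˢ G i))
            - κ (⋃ i ∈ s, (F a ∩ F i) ×ˢ (G a ∩ G i)) := by
      intro κ _
      rw [Finset.set_biUnion_insert]
      rw [← inter_eq]
      exact ENNReal.eq_sub_of_add_eq (measure_ne_top _ _) (measure_union_add_inter _ Bmble)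
    have hA := rect_tendsto hconv haa.1 haa.2
    have hB := IH F G hmem
    have hI := IH (fun i => F a ∩ F i) (fun i => G a ∩ G i)
      (fun i hi => ⟨haa.1.inter (hmem i hi).1, haa.2.inter (hmem i hi).2⟩)
    have := ENNReal.Tendsto.sub (hA.add hB) hI (Or.inl (by
      exact ENNReal.add_ne_top.mpr ⟨measure_ne_top _ _, measure_ne_top _ _⟩))
    simp only [← key] at this
    exact this

lemma atoms_countable (ν : ProbabilityMeasure ℝ) : {x : ℝ | (ν : Measure ℝ) {x} ≠ 0}.Countable := by
  have h := MeasureTheory.Measure.countable_meas_pos_of_disjoint_iUnion₀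
    (μ := (ν : Measure ℝ)) (As := fun x : ℝ => {x})
    (fun x => (measurableSet_singleton x).nullMeasurableSet)
    (fun i j hij => (Disjoint.aedisjoint (by simp [Function.onFun, hij])))
  exact h.mono fun x hx => by simpa [pos_iff_ne_zero] using hx

lemma good_interval (ν : ProbabilityMeasure ℝ) (a r : ℝ) (hr : 0 < r) :
    ∃ s : ℝ, 0 < s ∧ s < r ∧ NF ν (Set.Ioo (a - s) (a + s)) := by
  by_contra hcon
  push_neg at hcon
  have hsub : Set.Ioo (0:ℝ) r ⊆
      ((fun s => a - s) ⁻¹' {x : ℝ | (ν : Measure ℝ) {x} ≠ 0}) ∪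
      ((fun s => a + s) ⁻¹' {x : ℝ | (ν : Measure ℝ) {x} ≠ 0}) := by
    intro s hs
    have h := hcon s hs.1 hs.2
    have hlt : a - s < a + s := by linarith [hs.1]
    simp only [NF, frontier_Ioo hlt, isOpen_Ioo, true_and] at h
    by_contra hmem
    simp only [Set.mem_union, Set.mem_preimage, Set.mem_setOf_eq, not_or, not_not] at hmem
    apply h
    have : (ν : Measure ℝ) {a - s, a + s} ≤ (ν : Measure ℝ) {a - s} + (ν : Measure ℝ) {a + s} := by
      rw [Set.insert_eq]
      exact measure_union_le _ _
    simpa [hmem.1, hmem.2, nonpos_iff_eq_zero] using this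
  have hcnt : (Set.Ioo (0:ℝ) r).Countable := by
    refine Set.Countable.mono hsub (Set.Countable.union ?_ ?_)
    · exact (atoms_countable ν).preimage (sub_right_injective)
    · exact (atoms_countable ν).preimage (add_right_injective a)
  have := hcnt.measure_zero (volume : Measure ℝ)
  rw [Real.volume_Ioo] at this
  simp only [sub_zero] at this
  exact (ENNReal.ofReal_pos.mpr hr).ne' this

lemma open_le_liminf {μ : ℕ → ProbabilityMeasure ℝ} {ν : ProbabilityMeasure ℝ}
    (hconv : Tendsto μ atTop (𝓝 ν)) (Gs : Set (ℝ × ℝ)) (hG : IsOpen Gs) :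
    ((ν : Measure ℝ).prod (ν : Measure ℝ)) Gs
      ≤ atTop.liminf (fun n => ((μ n : Measure ℝ).prod (μ n : Measure ℝ)) Gs) := by
  rcases Set.eq_empty_or_nonempty Gs with rfl | hne
  · simp
  have hrect : ∀ p : ℝ × ℝ, p ∈ Gs →
      ∃ I J : Set ℝ, NF ν I ∧ NF ν J ∧ p ∈ I ×ˢ J ∧ I ×ˢ J ⊆ Gs := by
    intro p hp
    obtain ⟨u, v, hu, hv, hpu, hpv, huv⟩ := isOpen_prod_iff.mp hG p.1 p.2 hp
    obtain ⟨r, hr, hball⟩ := Metric.isOpen_iff.mp hu p.1 hpu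
    obtain ⟨r', hr', hball'⟩ := Metric.isOpen_iff.mp hv p.2 hpv
    obtain ⟨s, hs0, hsr, hNF⟩ := good_interval ν p.1 r hr
    obtain ⟨s', hs0', hsr', hNF'⟩ := good_interval ν p.2 r' hr'
    refine ⟨_, _, hNF, hNF', ⟨?_, ?_⟩, ?_⟩
    · exact ⟨by linarith, by linarith⟩
    · exact ⟨by linarith, by linarith⟩
    · refine Set.prod_mono ?_ ?_ |>.trans (Set.prod_mono hball hball' |>.trans huv)
      · intro x hx
        rw [Real.ball_eq_Ioo]
        exact ⟨by rcases hx with ⟨h1, h2⟩; linarith, by rcases hx with ⟨h1, h2⟩; linarith⟩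
      · intro x hx
        rw [Real.ball_eq_Ioo]
        exact ⟨by rcases hx with ⟨h1, h2⟩; linarith, by rcases hx with ⟨h1, h2⟩; linarith⟩
  choose I J hI hJ hmem hsub using fun p : Gs => hrect p p.2
  have hcover : Gs = ⋃ p : Gs, I p ×ˢ J p := by
    apply Set.Subset.antisymm
    · intro q hq
      exact Set.mem_iUnion.mpr ⟨⟨q, hq⟩, hmem ⟨q, hq⟩⟩
    · exact Set.iUnion_subset fun p => hsub p
  obtain ⟨T, hTc, hTeq⟩ := TopologicalSpace.isOpen_iUnion_countable
    (fun p : Gs => I p ×ˢ J p) (fun p => ((hI p).1.prod (hJ p).1))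
  have hTne : T.Nonempty := by
    by_contra hTe
    rw [Set.not_nonempty_iff_eq_empty] at hTe
    rw [hTe] at hTeq
    simp only [Set.mem_empty_iff_false, Set.iUnion_of_empty, Set.iUnion_false] at hTeq
    rw [hcover] at hne
    rw [← hTeq] at hne
    simp at hne
  obtain ⟨f, hf⟩ := hTc.exists_eq_range hTne
  have hGs_eq : Gs = ⋃ k : ℕ, I (f k) ×ˢ J (f k) := by
    rw [hcover, ← hTeq, hf]
    ext q
    simp
  set S : ℕ → Set (ℝ × ℝ) := fun m => ⋃ k ∈ Finset.range (m + 1), I (f k) ×ˢ J (f k) with hS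
  have hmono : Monotone S := by
    intro m m' hmm
    refine Set.iUnion₂_subset fun k hk => ?_
    have hk' : k ∈ Finset.range (m' + 1) := by
      simp only [Finset.mem_range] at hk ⊢
      omega
    exact Set.subset_iUnion₂ (s := fun k _ => I (f k) ×ˢ J (f k)) k hk'
  have hSU : ⋃ m, S m = Gs := by
    rw [hGs_eq]
    apply Set.Subset.antisymm
    · exact Set.iUnion_subset fun m => Set.iUnion₂_subset fun k _ => Set.subset_iUnion (fun k => I (f k) ×ˢ J (f k)) k
    · intro q hq
      obtain ⟨k, hk⟩ := Set.mem_iUnion.mp hq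
      exact Set.mem_iUnion.mpr ⟨k, Set.mem_biUnion (Finset.self_mem_range_succ k) hk⟩
  have hν : Tendsto (fun m => ((ν : Measure ℝ).prod (ν : Measure ℝ)) (S m)) atTop
      (𝓝 (((ν : Measure ℝ).prod (ν : Measure ℝ)) Gs)) := by
    rw [← hSU]
    exact tendsto_measure_iUnion_atTop hmono
  refine le_of_tendsto hν (Eventually.of_forall fun m => ?_)
  have hTend := union_tendsto hconv (Finset.range (m + 1)) (fun k => I (f k)) (fun k => J (f k))
    (fun k _ => ⟨hI (f k), hJ (f k)⟩)
  have heq : ((ν : Measure ℝ).prod (ν : Measure ℝ)) (S m)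
      = atTop.liminf (fun n => ((μ n : Measure ℝ).prod (μ n : Measure ℝ)) (S m)) :=
    (hTend.liminf_eq).symm
  rw [heq]
  refine liminf_le_liminf (Eventually.of_forall fun n => ?_)
  refine measure_mono ?_
  rw [← hSU]
  exact Set.subset_iUnion S m

lemma lsc_lintegral_le {μ : Measure (ℝ × ℝ)} {μs : ℕ → Measure (ℝ × ℝ)} {f : ℝ × ℝ → ℝ}
    (f_lsc : LowerSemicontinuous f) (f_nn : 0 ≤ f)
    (h_opens : ∀ G, IsOpen G → μ G ≤ atTop.liminf (fun i => μs i G)) :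
    ∫⁻ x, ENNReal.ofReal (f x) ∂μ
      ≤ atTop.liminf (fun i => ∫⁻ x, ENNReal.ofReal (f x) ∂(μs i)) := by
  simp_rw [lintegral_eq_lintegral_meas_lt _ (Eventually.of_forall f_nn)
    f_lsc.measurable.aemeasurable]
  calc  ∫⁻ (t : ℝ) in Set.Ioi 0, μ {a | t < f a}
      ≤ ∫⁻ (t : ℝ) in Set.Ioi 0, atTop.liminf (fun i => (μs i) {a | t < f a}) :=
        lintegral_mono (fun t => h_opens _ (f_lsc.isOpen_preimage t))
    _ ≤ atTop.liminf (fun i => ∫⁻ (t : ℝ) in Set.Ioi 0, (μs i) {a | t < f a}) :=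
        lintegral_liminf_le (fun n => Antitone.measurable (fun s t hst =>
          measure_mono (fun ω hω => lt_of_le_of_lt hst hω)))

/-- The discrepancy `κ` of (the law of) a nonnegative random variable:
`κ(X) = 𝔼|(X - X')/(X + X')|` with `X'` an independent copy of `X`
(convention `0/0 = 0`, the Lean convention for division). -/
noncomputable def kappa (μ : Measure ℝ) : ℝ :=
  ∫ p : ℝ × ℝ, |(p.1 - p.2) / (p.1 + p.2)| ∂(μ.prod μ)

/-- Lower semicontinuity of `κ` under weak convergence (convergence in distribution)
of nonnegative random variables. -/
theorem kappa_liminf (μ : ℕ → ProbabilityMeasure ℝ) (ν : ProbabilityMeasure ℝ)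
    (hnn : ∀ n, ∀ᵐ x ∂(μ n : Measure ℝ), 0 ≤ x)
    (hnnν : ∀ᵐ x ∂(ν : Measure ℝ), 0 ≤ x)
    (hconv : Tendsto μ atTop (𝓝 ν)) :
    kappa (ν : Measure ℝ) ≤ liminf (fun n => kappa (μ n : Measure ℝ)) atTop := by
  classical
  set f : ℝ × ℝ → ℝ := fun p => |(p.1 - p.2) / (p.1 + p.2)| with hfdef
  have f_nn : ∀ p, 0 ≤ f p := fun p => abs_nonneg _
  have f_meas : Measurable f := f_lsc.measurable
  have hκ : ∀ (κ : Measure ℝ), kappa κ = (∫⁻ p, ENNReal.ofReal (f p) ∂(κ.prod κ)).toReal := by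
    intro κ
    rw [kappa, integral_eq_lintegral_of_nonneg_ae (Eventually.of_forall f_nn)
      f_meas.aestronglyMeasurable]
  have hprod_ae : ∀ n, ∀ᵐ p ∂((μ n : Measure ℝ).prod (μ n : Measure ℝ)), 0 ≤ p.1 ∧ 0 ≤ p.2 := by
    intro n
    have hAc : (μ n : Measure ℝ) {x : ℝ | 0 ≤ x}ᶜ = 0 := by
      have := hnn n
      rw [ae_iff] at this
      simpa [Set.compl_setOf] using this
    rw [ae_iff]
    have hsub : {p : ℝ × ℝ | ¬(0 ≤ p.1 ∧ 0 ≤ p.2)}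
        ⊆ ({x : ℝ | 0 ≤ x}ᶜ ×ˢ Set.univ) ∪ (Set.univ ×ˢ {x : ℝ | 0 ≤ x}ᶜ) := by
      intro p hp
      simp only [Set.mem_setOf_eq, not_and_or] at hp
      rcases hp with h | h
      · exact Or.inl ⟨h, Set.mem_univ _⟩
      · exact Or.inr ⟨Set.mem_univ _, h⟩
    refine le_antisymm ?_ zero_le
    calc ((μ n : Measure ℝ).prod (μ n : Measure ℝ)) {p : ℝ × ℝ | ¬(0 ≤ p.1 ∧ 0 ≤ p.2)}
        ≤ ((μ n : Measure ℝ).prod (μ n : Measure ℝ))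
            (({x : ℝ | 0 ≤ x}ᶜ ×ˢ Set.univ) ∪ (Set.univ ×ˢ {x : ℝ | 0 ≤ x}ᶜ)) :=
          measure_mono hsub
      _ ≤ ((μ n : Measure ℝ).prod (μ n : Measure ℝ)) ({x : ℝ | 0 ≤ x}ᶜ ×ˢ Set.univ)
            + ((μ n : Measure ℝ).prod (μ n : Measure ℝ)) (Set.univ ×ˢ {x : ℝ | 0 ≤ x}ᶜ) :=
          measure_union_le _ _
      _ = 0 := by
          rw [Measure.prod_prod, Measure.prod_prod, hAc]
          simp
  have hbound : ∀ n, ∫⁻ p, ENNReal.ofReal (f p) ∂((μ n : Measure ℝ).prod (μ n : Measure ℝ)) ≤ 1 := by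
    intro n
    have hle : ∀ᵐ p ∂((μ n : Measure ℝ).prod (μ n : Measure ℝ)),
        ENNReal.ofReal (f p) ≤ 1 := by
      filter_upwards [hprod_ae n] with p hp
      rw [ENNReal.ofReal_le_one]
      show |(p.1 - p.2) / (p.1 + p.2)| ≤ 1
      rcases eq_or_lt_of_le (add_nonneg hp.1 hp.2) with h | h
      · rw [← h]
        simp
      · rw [abs_div, abs_of_pos h, div_le_one h]
        exact abs_le.mpr ⟨by linarith [hp.1, hp.2], by linarith [hp.1, hp.2]⟩
    calc ∫⁻ p, ENNReal.ofReal (f p) ∂((μ n : Measure ℝ).prod (μ n : Measure ℝ))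
        ≤ ∫⁻ _, 1 ∂((μ n : Measure ℝ).prod (μ n : Measure ℝ)) := lintegral_mono_ae hle
      _ = 1 := by simp
  have hmain : ∫⁻ p, ENNReal.ofReal (f p) ∂((ν : Measure ℝ).prod (ν : Measure ℝ))
      ≤ atTop.liminf (fun n => ∫⁻ p, ENNReal.ofReal (f p)
          ∂((μ n : Measure ℝ).prod (μ n : Measure ℝ))) :=
    lsc_lintegral_le f_lsc (fun p => f_nn p) (fun G hG => open_le_liminf hconv G hG)
  have hliminf_ne : atTop.liminf (fun n => ∫⁻ p, ENNReal.ofReal (f p)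
      ∂((μ n : Measure ℝ).prod (μ n : Measure ℝ))) ≠ ⊤ := by
    refine ne_top_of_le_ne_top one_ne_top ?_
    calc atTop.liminf (fun n => ∫⁻ p, ENNReal.ofReal (f p)
          ∂((μ n : Measure ℝ).prod (μ n : Measure ℝ)))
        ≤ atTop.liminf (fun _ : ℕ => (1 : ℝ≥0∞)) :=
          liminf_le_liminf (Eventually.of_forall hbound)
      _ = 1 := liminf_const 1
  have heq : liminf (fun n => kappa (μ n : Measure ℝ)) atTop
      = (atTop.liminf (fun n => ∫⁻ p, ENNReal.ofReal (f p)
          ∂((μ n : Measure ℝ).prod (μ n : Measure ℝ)))).toReal := by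
    simp_rw [hκ]
    exact ENNReal.liminf_toReal_eq one_ne_top (Eventually.of_forall hbound)
  rw [hκ, heq]
  exact ENNReal.toReal_mono hliminf_ne hmain
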